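/- Combinatorial equality for d = 4: for all natural numbers u, 364·C(u+2, 4) + 784·C(u+1, 4) + 148·C(u, 4) = Σ_{i=0}^{4} (−1)^i C(u, i)·C(7u, 4−i). -/

import Mathlib

lemma cast_descFactorial_int (u : ℕ) : ∀ k : ℕ,
    ((u.descFactorial k : ℤ)) = ∏ i ∈ Finset.range k, ((u : ℤ) - i) := by
  intro k
  induction k with
  | zero => simp
  | succ k ih =>
    rw [Nat.descFactorial_succ, Finset.prod_range_succ]
    by_cases h : k ≤ u
    · push_cast [h]
      rw [← ih]; ring
    · push_neg at h
      rw [Nat.sub_eq_zero_of_le (le_of_lt h)]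
      have hz : ∏ i ∈ Finset.range k, ((u : ℤ) - i) = 0 := by
        apply Finset.prod_eq_zero (Finset.mem_range.mpr h)
        simp
      rw [hz]
      simp

lemma choose_mul_int (u k : ℕ) :
    ((k.factorial : ℤ)) * (u.choose k : ℤ) = ∏ i ∈ Finset.range k, ((u : ℤ) - i) := by
  rw [← cast_descFactorial_int, Nat.descFactorial_eq_factorial_mul_choose]
  push_cast
  ring

lemma choose4_int (n : ℕ) :
    (24 : ℤ) * (n.choose 4 : ℤ) = n * ((n : ℤ) - 1) * ((n : ℤ) - 2) * ((n : ℤ) - 3) := by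
  have h := choose_mul_int n 4
  simp only [Finset.prod_range_succ, Finset.prod_range_zero, Nat.factorial] at h
  push_cast at h
  linear_combination h

lemma choose3_int (n : ℕ) :
    (6 : ℤ) * (n.choose 3 : ℤ) = n * ((n : ℤ) - 1) * ((n : ℤ) - 2) := by
  have h := choose_mul_int n 3
  simp only [Finset.prod_range_succ, Finset.prod_range_zero, Nat.factorial] at h
  push_cast at h
  linear_combination h

lemma choose2_int (n : ℕ) :
    (2 : ℤ) * (n.choose 2 : ℤ) = n * ((n : ℤ) - 1) := by
  have h := choose_mul_int n 2
  simp only [Finset.prod_range_succ, Finset.prod_range_zero, Nat.factorial] at h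
  push_cast at h
  linear_combination h

/-- Combinatorial equality for `d = 4`:
`364·C(u+2,4) + 784·C(u+1,4) + 148·C(u,4)
  = Σ_{i=0}^{4} (-1)^i C(u,i)·C(7u, 4-i)`. -/
theorem combinatorial_equality_d_four (u : ℕ) :
    (364 * (u + 2).choose 4 + 784 * (u + 1).choose 4 + 148 * u.choose 4 : ℤ) =
      ∑ i ∈ Finset.range 5,
        (-1 : ℤ) ^ i * (u.choose i) * ((7 * u).choose (4 - i)) := by
  have h1 := choose4_int (u + 2)
  have h2 := choose4_int (u + 1)
  have h3 := choose4_int u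
  have h4 := choose4_int (7 * u)
  have h6 := choose3_int (7 * u)
  have h7 := choose2_int u
  have h8 := choose2_int (7 * u)
  have h9 := choose3_int u
  rw [Finset.sum_range_succ, Finset.sum_range_succ, Finset.sum_range_succ,
    Finset.sum_range_succ, Finset.sum_range_succ, Finset.sum_range_zero]
  simp only [Nat.choose_zero_right, Nat.choose_one_right, Nat.choose_self]
  norm_num
  push_cast at h1 h2 h3 h4 h6 h7 h8 h9 ⊢
  apply mul_left_cancel₀ (show (24 : ℤ) ≠ 0 by norm_num)
  linear_combination (364 : ℤ) * h1 + 784 * h2 + 148 * h3 - h4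
    + 4 * (u : ℤ) * h6
    - 12 * ((u.choose 2 : ℤ)) * h8 - 6 * (7 * (u : ℤ) * (7 * (u : ℤ) - 1)) * h7
    + 28 * (u : ℤ) * h9
    - h3
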